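/- Under the hypotheses of the previous lemma, and additionally setting h̃ := h + vᵀ Λ_{j-1} v, one has h̃ · (h^{-1} - h^{-2} vᵀ Λ_j v) = 1; equivalently h̃^{-1} = h^{-1} - h^{-2} vᵀ Λ_j v. -/

import Mathlib

open Matrix

lemma vecMulVec_mulVec' (w v x : Fin 2 → ℝ) :
    (vecMulVec w v).mulVec x = (v ⬝ᵥ x) • w := by
  ext i
  simp [vecMulVec, mulVec, dotProduct, Finset.mul_sum, Pi.smul_apply, mul_comm,
    mul_left_comm, smul_eq_mul]
  ring

/-- Norm relation for the Sobolev norm `h̃ = h + vᵀ Λ_{j-1} v` (Lemma 4.3 of the paper):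
`h̃ (h⁻¹ - h⁻² vᵀ Λ_j v) = 1`. -/
theorem sobolev_norm_inverse (M Kprev Kcur : Matrix (Fin 2) (Fin 2) ℝ)
    (hM : M.PosSemidef) (v : Fin 2 → ℝ) (h : ℝ) (hh : 0 < h)
    (hK : Kcur = Kprev + h⁻¹ • vecMulVec v v)
    (hprev : IsUnit (1 + M * Kprev)) (hcur : IsUnit (1 + M * Kcur)) :
    (h + v ⬝ᵥ ((1 + M * Kprev)⁻¹ * M).mulVec v) *
        (h⁻¹ - h⁻¹ ^ 2 * (v ⬝ᵥ ((1 + M * Kcur)⁻¹ * M).mulVec v)) = 1 := by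
  set A := 1 + M * Kprev with hA
  set B := 1 + M * Kcur with hB
  have hAdet : IsUnit A.det := (Matrix.isUnit_iff_isUnit_det A).mp hprev
  have hBdet : IsUnit B.det := (Matrix.isUnit_iff_isUnit_det B).mp hcur
  have hAinv : A * A⁻¹ = 1 := Matrix.mul_nonsing_inv A hAdet
  have hBinv : B⁻¹ * B = 1 := Matrix.nonsing_inv_mul B hBdet
  set w : Fin 2 → ℝ := (A⁻¹ * M).mulVec v with hw
  set a : ℝ := v ⬝ᵥ w with ha
  have hAw : A.mulVec w = M.mulVec v := by
    rw [hw, Matrix.mulVec_mulVec, ← Matrix.mul_assoc, hAinv, Matrix.one_mul]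
  have hBA : B = A + h⁻¹ • (M * vecMulVec v v) := by
    rw [hB, hK, mul_add, Matrix.mul_smul, ← add_assoc, ← hA]
  have hBw : B.mulVec w = (1 + h⁻¹ * a) • M.mulVec v := by
    rw [hBA, Matrix.add_mulVec, hAw, Matrix.smul_mulVec,
      ← Matrix.mulVec_mulVec, vecMulVec_mulVec', ← ha]
    ext i
    simp [Matrix.mulVec_smul, smul_eq_mul]
    fin_cases i <;> simp <;> ring
  have hne : h + a ≠ 0 := by
    intro hcontra
    have ha' : a = -h := by linarith
    have hBw0 : B.mulVec w = 0 := by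
      rw [hBw, ha']
      have : (1 + h⁻¹ * -h) = 0 := by field_simp; norm_num
      rw [this, zero_smul]
    have hw0 : w = 0 := by
      have := congrArg (fun x => B⁻¹.mulVec x) hBw0
      simpa only [Matrix.mulVec_mulVec, hBinv, Matrix.one_mulVec, Matrix.mulVec_zero] using this
    have : a = 0 := by rw [ha, hw0, dotProduct_zero]
    rw [this] at ha'; linarith
  -- key: (B⁻¹ * M).mulVec v = (h / (h + a)) • w
  have hkey : (B⁻¹ * M).mulVec v = (h / (h + a)) • w := by
    have hBc : B.mulVec ((h / (h + a)) • w) = M.mulVec v := by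
      rw [Matrix.mulVec_smul, hBw]
      rw [smul_smul]
      have : h / (h + a) * (1 + h⁻¹ * a) = 1 := by
        field_simp
      rw [this, one_smul]
    calc (B⁻¹ * M).mulVec v = B⁻¹.mulVec (M.mulVec v) := by
          rw [← Matrix.mulVec_mulVec]
      _ = B⁻¹.mulVec (B.mulVec ((h / (h + a)) • w)) := by rw [hBc]
      _ = (h / (h + a)) • w := by
          rw [Matrix.mulVec_mulVec, hBinv, Matrix.one_mulVec]
  rw [hkey, dotProduct_smul, smul_eq_mul, ← ha]
  field_simp
  ring
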